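/- arXiv:2211.04586 — 4 statements merged into one kernel-verified Lean document; each statement's English description precedes it below -/
import Mathlib

section
/- Let Fλ and Fλ' be the CDFs of exponential distributions with rates 0 < λ < λ'. Then the total variation distance satisfies d_TV(Fλ, Fλ') = (λ/λ')^{λ/(λ'-λ)} - (λ/λ')^{λ'/(λ'-λ)} ≤ 1 - λ/λ'. -/
set_option maxHeartbeats 800000

open MeasureTheory Set Real

lemma tail_int (μ a : ℝ) (hμ : 0 < μ) :
    ∫ x in Set.Ioi a, μ * Real.exp (-μ * x) = Real.exp (-μ * a) := by
  have hderiv : ∀ x ∈ Ici a, HasDerivAt (fun y => -Real.exp (-μ * y)) (μ * Real.exp (-μ * x)) x := by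
    intro x _
    have h1 : HasDerivAt (fun y : ℝ => -μ * y) (-μ) x := by
      simpa using (hasDerivAt_id x).const_mul (-μ)
    have : HasDerivAt (fun y => -Real.exp (-μ * y)) (-(Real.exp (-μ * x) * -μ)) x := (h1.exp).neg
    convert this using 1
    ring
  have hint : IntegrableOn (fun x => μ * Real.exp (-μ * x)) (Ioi a) :=
    (exp_neg_integrableOn_Ioi a hμ).const_mul μ
  have htend : Filter.Tendsto (fun y => -Real.exp (-μ * y)) Filter.atTop (nhds 0) := by
    have : Filter.Tendsto (fun y : ℝ => Real.exp (-(μ * y))) Filter.atTop (nhds 0) :=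
      Real.tendsto_exp_neg_atTop_nhds_zero.comp (Filter.Tendsto.const_mul_atTop hμ Filter.tendsto_id)
    simpa [neg_mul] using this.neg
  have := integral_Ioi_of_hasDerivAt_of_tendsto' hderiv hint htend
  rw [this]; ring

/-- The total variation distance between exponential distributions with rates
`0 < λ < λ'` equals `(λ/λ')^{λ/(λ'-λ)} - (λ/λ')^{λ'/(λ'-λ)}` and is at most `1 - λ/λ'`. -/
theorem stmt3 (lam lam' : ℝ) (h0 : 0 < lam) (h : lam < lam') :
    ((1:ℝ)/2) * (∫ x in Set.Ici (0:ℝ),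
        |lam * Real.exp (-lam * x) - lam' * Real.exp (-lam' * x)|)
      = (lam / lam') ^ (lam / (lam' - lam)) - (lam / lam') ^ (lam' / (lam' - lam))
    ∧ (lam / lam') ^ (lam / (lam' - lam)) - (lam / lam') ^ (lam' / (lam' - lam))
      ≤ 1 - lam / lam' := by
  have h0' : 0 < lam' := h0.trans h
  have hd : 0 < lam' - lam := by linarith
  set s : ℝ := Real.log (lam' / lam) / (lam' - lam) with hs_def
  have hlog : Real.log (lam' / lam) = Real.log lam' - Real.log lam :=
    Real.log_div (ne_of_gt h0') (ne_of_gt h0)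
  have hs : (lam' - lam) * s = Real.log lam' - Real.log lam := by
    rw [hs_def, mul_div_cancel₀ _ (ne_of_gt hd)] at *
    exact hlog
  have hs0 : 0 ≤ s := by
    apply div_nonneg _ (le_of_lt hd)
    apply Real.log_nonneg
    rw [le_div_iff₀ h0]; linarith
  set f : ℝ → ℝ := fun x => lam * Real.exp (-lam * x) with hf
  set g : ℝ → ℝ := fun x => lam' * Real.exp (-lam' * x) with hg
  -- pointwise comparison
  have key : ∀ x : ℝ, x ≤ s → f x ≤ g x := by
    intro x hx
    have e1 : f x = Real.exp (Real.log lam + -lam * x) := by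
      rw [Real.exp_add, Real.exp_log h0]
    have e2 : g x = Real.exp (Real.log lam' + -lam' * x) := by
      rw [Real.exp_add, Real.exp_log h0']
    rw [e1, e2]
    apply Real.exp_le_exp.mpr
    nlinarith [mul_le_mul_of_nonneg_left hx (le_of_lt hd)]
  have key' : ∀ x : ℝ, s ≤ x → g x ≤ f x := by
    intro x hx
    have e1 : f x = Real.exp (Real.log lam + -lam * x) := by
      rw [Real.exp_add, Real.exp_log h0]
    have e2 : g x = Real.exp (Real.log lam' + -lam' * x) := by
      rw [Real.exp_add, Real.exp_log h0']
    rw [e1, e2]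
    apply Real.exp_le_exp.mpr
    nlinarith [mul_le_mul_of_nonneg_left hx (le_of_lt hd)]
  -- integrability
  have hfc : Continuous f := by fun_prop
  have hgc : Continuous g := by fun_prop
  have hfI : ∀ a : ℝ, IntegrableOn f (Ioi a) := fun a =>
    (exp_neg_integrableOn_Ioi a h0).const_mul lam
  have hgI : ∀ a : ℝ, IntegrableOn g (Ioi a) := fun a =>
    (exp_neg_integrableOn_Ioi a h0').const_mul lam'
  have hIcc_f : IntegrableOn f (Icc 0 s) := hfc.integrableOn_Icc
  have hIcc_g : IntegrableOn g (Icc 0 s) := hgc.integrableOn_Icc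
  -- split Ici 0 = Icc 0 s ∪ Ioi s
  have hsplit : Icc (0:ℝ) s ∪ Ioi s = Ici 0 := Set.Icc_union_Ioi_eq_Ici hs0
  have hdisj : Disjoint (Icc (0:ℝ) s) (Ioi s) := by
    rw [Set.disjoint_left]
    intro x hx hx'
    exact absurd hx.2 (not_le.mpr hx')
  have habs_int : ∫ x in Ici (0:ℝ), |f x - g x|
      = (∫ x in Icc (0:ℝ) s, |f x - g x|) + ∫ x in Ioi s, |f x - g x| := by
    rw [← hsplit]
    exact setIntegral_union hdisj measurableSet_Ioi
      ((hIcc_f.sub hIcc_g).abs) (((hfI s).sub (hgI s)).abs)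
  -- replace abs on each piece
  have h1 : ∫ x in Icc (0:ℝ) s, |f x - g x| = (∫ x in Icc (0:ℝ) s, g x) - ∫ x in Icc (0:ℝ) s, f x := by
    rw [← integral_sub hIcc_g hIcc_f]
    apply setIntegral_congr_fun measurableSet_Icc
    intro x hx
    show |f x - g x| = g x - f x
    rw [abs_of_nonpos (by linarith [key x hx.2])]
    ring
  have h2 : ∫ x in Ioi s, |f x - g x| = (∫ x in Ioi s, f x) - ∫ x in Ioi s, g x := by
    rw [← integral_sub (hfI s) (hgI s)]
    apply setIntegral_congr_fun measurableSet_Ioi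
    intro x hx
    show |f x - g x| = f x - g x
    exact abs_of_nonneg (by linarith [key' x (le_of_lt hx)])
  -- compute tails
  have tf0 : ∫ x in Ioi (0:ℝ), f x = 1 := by
    rw [hf]; simpa using tail_int lam 0 h0
  have tg0 : ∫ x in Ioi (0:ℝ), g x = 1 := by
    rw [hg]; simpa using tail_int lam' 0 h0'
  have tfs : ∫ x in Ioi s, f x = Real.exp (-lam * s) := tail_int lam s h0
  have tgs : ∫ x in Ioi s, g x = Real.exp (-lam' * s) := tail_int lam' s h0'
  -- Icc values via splitting Ioi 0 = Icc? use Ici 0 split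
  have hIcif : ∫ x in Ici (0:ℝ), f x = (∫ x in Icc (0:ℝ) s, f x) + ∫ x in Ioi s, f x := by
    rw [← hsplit]; exact setIntegral_union hdisj measurableSet_Ioi hIcc_f (hfI s)
  have hIcig : ∫ x in Ici (0:ℝ), g x = (∫ x in Icc (0:ℝ) s, g x) + ∫ x in Ioi s, g x := by
    rw [← hsplit]; exact setIntegral_union hdisj measurableSet_Ioi hIcc_g (hgI s)
  have hIf : ∫ x in Ici (0:ℝ), f x = 1 := by
    rw [integral_Ici_eq_integral_Ioi]; exact tf0
  have hIg : ∫ x in Ici (0:ℝ), g x = 1 := by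
    rw [integral_Ici_eq_integral_Ioi]; exact tg0
  have hfs_Icc : ∫ x in Icc (0:ℝ) s, f x = 1 - Real.exp (-lam * s) := by
    rw [hIf, tfs] at hIcif; linarith
  have hgs_Icc : ∫ x in Icc (0:ℝ) s, g x = 1 - Real.exp (-lam' * s) := by
    rw [hIg, tgs] at hIcig; linarith
  have hmain : ∫ x in Ici (0:ℝ), |f x - g x|
      = 2 * (Real.exp (-lam * s) - Real.exp (-lam' * s)) := by
    rw [habs_int, h1, h2, hfs_Icc, hgs_Icc, tfs, tgs]; ring
  -- identify with rpow
  have hr : (0:ℝ) < lam / lam' := div_pos h0 h0'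
  have hlogr : Real.log (lam / lam') = Real.log lam - Real.log lam' :=
    Real.log_div (ne_of_gt h0) (ne_of_gt h0')
  have hA : Real.exp (-lam * s) = (lam / lam') ^ (lam / (lam' - lam)) := by
    rw [Real.rpow_def_of_pos hr, hlogr]
    congr 1
    field_simp
    nlinarith [hs]
  have hB : Real.exp (-lam' * s) = (lam / lam') ^ (lam' / (lam' - lam)) := by
    rw [Real.rpow_def_of_pos hr, hlogr]
    congr 1
    field_simp
    nlinarith [hs]
  constructor
  · rw [hmain, hA, hB]; ring
  · have hexp : lam' / (lam' - lam) = lam / (lam' - lam) + 1 := by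
      field_simp
      ring
    rw [hexp, Real.rpow_add hr, Real.rpow_one]
    have hr1 : lam / lam' ≤ 1 := by
      rw [div_le_one h0']; linarith
    have hpow1 : (lam / lam') ^ (lam / (lam' - lam)) ≤ 1 :=
      Real.rpow_le_one (le_of_lt hr) hr1 (le_of_lt (div_pos h0 hd))
    have hpos : (0:ℝ) ≤ (lam / lam') ^ (lam / (lam' - lam)) := Real.rpow_nonneg (le_of_lt hr) _
    nlinarith
end

section
/- For exponential distributions with rates 0 < λ ≤ λ', the total variation distance satisfies d_TV(Fλ, Fλ') ≤ min{λ, λ'} · |1/λ - 1/λ'|. -/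
open MeasureTheory Real Set Filter

lemma aux_int_exp (b : ℝ) (hb : 0 < b) :
    ∫ x in Set.Ioi (0:ℝ), Real.exp (-b * x) = 1 / b := by
  have hderiv : ∀ y ∈ Set.Ici (0:ℝ),
      HasDerivAt (fun y : ℝ => -Real.exp (-b * y) / b) (Real.exp (-b * y)) y := by
    intro y _
    have h1 : HasDerivAt (fun y : ℝ => -b * y) (-b) y := by
      simpa using (hasDerivAt_id y).const_mul (-b)
    have h2 := (h1.exp.neg.div_const b)
    convert h2 using 1
    case e'_9 => field_simp
    all_goals rfl
  have htend : Tendsto (fun y : ℝ => -Real.exp (-b * y) / b) atTop (nhds 0) := by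
    have : Tendsto (fun y : ℝ => Real.exp (-b * y)) atTop (nhds 0) := by
      apply Real.tendsto_exp_comp_nhds_zero.mpr
      exact Tendsto.const_mul_atTop_of_neg (neg_neg_iff_pos.mpr hb) tendsto_id
    simpa using this.neg.div_const b
  have h := integral_Ioi_of_hasDerivAt_of_tendsto' hderiv (exp_neg_integrableOn_Ioi 0 hb) htend
  rw [h]
  norm_num
  rw [neg_div, neg_neg, one_div]

/-- For exponential distributions with rates `0 < λ ≤ λ'`, the total variation
distance is at most `min{λ, λ'} * |1/λ - 1/λ'|`. -/
theorem stmt4 (lam lam' : ℝ) (h0 : 0 < lam) (h : lam ≤ lam') :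
    ((1:ℝ)/2) * (∫ x in Set.Ici (0:ℝ),
        |lam * Real.exp (-lam * x) - lam' * Real.exp (-lam' * x)|)
      ≤ min lam lam' * |1 / lam - 1 / lam'| := by
  have h0' : 0 < lam' := h0.trans_le h
  set f : ℝ → ℝ := fun x => lam * Real.exp (-lam * x) with hf_def
  set g : ℝ → ℝ := fun x => lam' * Real.exp (-lam' * x) with hg_def
  have hfi : IntegrableOn f (Set.Ioi 0) := (exp_neg_integrableOn_Ioi 0 h0).const_mul lam
  have hgi : IntegrableOn g (Set.Ioi 0) := (exp_neg_integrableOn_Ioi 0 h0').const_mul lam'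
  have hIf : ∫ x in Set.Ioi (0:ℝ), f x = 1 := by
    simp only [hf_def, MeasureTheory.integral_const_mul, aux_int_exp lam h0]
    field_simp
  have hIg : ∫ x in Set.Ioi (0:ℝ), g x = 1 := by
    simp only [hg_def, MeasureTheory.integral_const_mul, aux_int_exp lam' h0']
    field_simp
  have hpos : IntegrableOn (fun x => max (g x - f x) 0) (Set.Ioi 0) := (hgi.sub hfi).pos_part
  -- pointwise identity |f-g| = (f-g) + 2*max(g-f,0)
  have hptw : ∀ x, |f x - g x| = (f x - g x) + 2 * max (g x - f x) 0 := by
    intro x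
    rcases le_total (f x) (g x) with hc | hc
    · rw [abs_of_nonpos (by linarith), max_eq_left (by linarith)]; ring
    · rw [abs_of_nonneg (by linarith), max_eq_right (by linarith)]; ring
  have hIabs : ∫ x in Set.Ioi (0:ℝ), |f x - g x|
      = 2 * ∫ x in Set.Ioi (0:ℝ), max (g x - f x) 0 := by
    calc ∫ x in Set.Ioi (0:ℝ), |f x - g x|
        = ∫ x in Set.Ioi (0:ℝ), ((f x - g x) + 2 * max (g x - f x) 0) := by
          exact integral_congr_ae (Filter.Eventually.of_forall fun x => hptw x)
      _ = (∫ x in Set.Ioi (0:ℝ), (f x - g x))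
            + ∫ x in Set.Ioi (0:ℝ), 2 * max (g x - f x) 0 :=
          integral_add (hfi.sub hgi) (hpos.const_mul 2)
      _ = 2 * ∫ x in Set.Ioi (0:ℝ), max (g x - f x) 0 := by
          rw [integral_sub hfi hgi, hIf, hIg, MeasureTheory.integral_const_mul]; ring
  -- bound the positive part integral
  have hbound : ∫ x in Set.Ioi (0:ℝ), max (g x - f x) 0
      ≤ ∫ x in Set.Ioi (0:ℝ), (lam' - lam) * Real.exp (-lam' * x) := by
    apply setIntegral_mono_on hpos ((exp_neg_integrableOn_Ioi 0 h0').const_mul _)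
      measurableSet_Ioi
    intro x hx
    have hx0 : (0:ℝ) ≤ x := le_of_lt hx
    have hexp : Real.exp (-lam' * x) ≤ Real.exp (-lam * x) :=
      Real.exp_le_exp.mpr (by nlinarith)
    have h1 : g x - f x ≤ (lam' - lam) * Real.exp (-lam' * x) := by
      simp only [hf_def, hg_def]
      nlinarith [Real.exp_pos (-lam' * x)]
    have h2 : (0:ℝ) ≤ (lam' - lam) * Real.exp (-lam' * x) :=
      mul_nonneg (by linarith) (Real.exp_pos _).le
    exact max_le h1 h2
  have hval : ∫ x in Set.Ioi (0:ℝ), (lam' - lam) * Real.exp (-lam' * x)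
      = (lam' - lam) / lam' := by
    rw [MeasureTheory.integral_const_mul, aux_int_exp lam' h0']
    ring
  have hRHS : min lam lam' * |1 / lam - 1 / lam'| = (lam' - lam) / lam' := by
    rw [min_eq_left h, abs_of_nonneg (by
      rw [sub_nonneg]; exact one_div_le_one_div_of_le h0 h)]
    field_simp
  rw [MeasureTheory.integral_Ici_eq_integral_Ioi]
  have : ∫ x in Set.Ioi (0:ℝ), |lam * Real.exp (-lam * x) - lam' * Real.exp (-lam' * x)|
      = ∫ x in Set.Ioi (0:ℝ), |f x - g x| := rfl
  rw [this, hIabs, hRHS]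
  linarith [hbound.trans_eq hval]
end

section
/- Let Fλ denote the CDF of an exponential distribution with rate λ, and consider perceived distributions F̂ₜ equal to F_{λₜ} truncated at a cap q̄, where 1/λₜ = fₜ(wₜ)·(Σᵢ₌₁^{t-1} ξᵢ)/(t-1) with fₜ(w) = (t-1)·((s/w)^{1/t} - 1)/ln(s/w) ∈ [(t-1)/t, 1) for all w ∈ (0, s). Then for t ≥ 2, d_K(F̂ₜ, F̂ₜ₊₁) ≤ 2/(t-1) + ξₜ/(Σᵢ₌₁^{t-1} ξᵢ). -/
open Finset

/-- Exponential CDF with rate `lam`, truncated at the cap `qbar`. -/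
noncomputable def truncExpCDF (lam qbar : ℝ) : ℝ → ℝ := fun x =>
  if x < 0 then 0 else if x < qbar then 1 - Real.exp (-lam * x) else 1

private lemma keycase1' (T S xi f g : ℝ) (hT : 2 ≤ T) (hS : 0 < S) (hxi : 0 < xi)
    (hfl : T - 1 ≤ f * T) (hfu : f < 1) (hgl : T ≤ g * (T + 1)) (hgu : g < 1)
    (hfp : 0 < f) (hgp : 0 < g) :
    g * ((S + xi) / T) - f * (S / (T - 1)) ≤
      (2 / (T - 1) + xi / S) * (g * ((S + xi) / T)) := by
  have h1 : (0:ℝ) < T - 1 := by linarith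
  have h0 : (0:ℝ) < T := by linarith
  have hc0 : (0:ℝ) < (T - 1) * S * T := by positivity
  refine le_of_mul_le_mul_right ?_ hc0
  have e1 : (g * ((S + xi) / T) - f * (S / (T - 1))) * ((T - 1) * S * T)
      = g * (S + xi) * (T - 1) * S - f * S * S * T := by
    field_simp
  have e2 : (2 / (T - 1) + xi / S) * (g * ((S + xi) / T)) * ((T - 1) * S * T)
      = 2 * S * (g * (S + xi)) + xi * (T - 1) * (g * (S + xi)) := by
    field_simp
  rw [e1, e2]
  nlinarith [mul_nonneg (mul_nonneg (sub_nonneg.2 hgu.le) (mul_pos hS hS).le) h1.le,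
    mul_nonneg (sub_nonneg.2 hfl) (mul_pos hS hS).le,
    mul_nonneg (mul_nonneg hgp.le (mul_pos hxi hxi).le) h1.le,
    mul_nonneg (mul_nonneg (mul_pos hS hgp).le (by linarith : (0:ℝ) ≤ S + xi)) (by norm_num : (0:ℝ) ≤ 2)]

private lemma keycase2' (T S xi f g : ℝ) (hT : 2 ≤ T) (hS : 0 < S) (hxi : 0 < xi)
    (hfl : T - 1 ≤ f * T) (hfu : f < 1) (hgl : T ≤ g * (T + 1)) (hgu : g < 1)
    (hfp : 0 < f) (hgp : 0 < g) :
    f * (S / (T - 1)) - g * ((S + xi) / T) ≤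
      (2 / (T - 1) + xi / S) * (f * (S / (T - 1))) := by
  have h1 : (0:ℝ) < T - 1 := by linarith
  have h0 : (0:ℝ) < T := by linarith
  have h2 : (0:ℝ) < T + 1 := by linarith
  have hc0 : (0:ℝ) < (T - 1) * (T - 1) * S * T * (T + 1) := by positivity
  refine le_of_mul_le_mul_right ?_ hc0
  have e1 : (f * (S / (T - 1)) - g * ((S + xi) / T)) * ((T - 1) * (T - 1) * S * T * (T + 1))
      = f * S * S * T * (T - 1) * (T + 1) - g * (S + xi) * (T - 1) * (T - 1) * S * (T + 1) := by
    field_simp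
  have e2 : (2 / (T - 1) + xi / S) * (f * (S / (T - 1))) * ((T - 1) * (T - 1) * S * T * (T + 1))
      = 2 * f * S * S * T * (T + 1) + xi * f * S * T * (T - 1) * (T + 1) := by
    field_simp
  rw [e1, e2]
  nlinarith [mul_nonneg (sub_nonneg.2 hgl) (mul_nonneg (mul_pos hS hS).le (mul_pos h1 h1).le),
    mul_nonneg (sub_nonneg.2 hfu.le) (mul_nonneg (mul_pos hS hS).le (mul_pos (mul_pos h1 h1) h0).le),
    mul_nonneg hfp.le (mul_pos (mul_pos hS hS) h0).le,
    mul_nonneg (mul_nonneg hgp.le hxi.le) (mul_nonneg hS.le (mul_pos (mul_pos h1 h1) h2).le),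
    mul_nonneg (mul_nonneg hxi.le hfp.le) (mul_nonneg hS.le (mul_pos (mul_pos h0 h1) h2).le)]

private lemma exp_sub_exp_le' {lam mu x : ℝ} (h0 : 0 < lam) (hle : lam ≤ mu) :
    Real.exp (-lam * x) - Real.exp (-mu * x) ≤ 1 - lam / mu := by
  have hmu : 0 < mu := lt_of_lt_of_le h0 hle
  set a := Real.exp (-lam * x) with ha
  have hapos : 0 < a := Real.exp_pos _
  have hr : a ^ (mu / lam) = Real.exp (-mu * x) := by
    rw [ha, ← Real.exp_mul]
    congr 1
    field_simp
  have hw1 : (0:ℝ) ≤ lam / mu := by positivity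
  have hw2' : lam / mu ≤ 1 := (div_le_one hmu).mpr hle
  have hw2 : (0:ℝ) ≤ 1 - lam / mu := by linarith
  have hp1 : (0:ℝ) ≤ a ^ (mu / lam) := Real.rpow_nonneg hapos.le _
  have key := Real.geom_mean_le_arith_mean2_weighted hw1 hw2 hp1 zero_le_one
    (by ring : lam / mu + (1 - lam / mu) = 1)
  rw [Real.one_rpow, mul_one, mul_one, ← Real.rpow_mul hapos.le,
    div_mul_div_comm, mul_comm mu lam, div_self (by positivity), Real.rpow_one] at key
  have hprod : 0 ≤ (1 - lam / mu) * a ^ (mu / lam) := mul_nonneg hw2 hp1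
  rw [← hr]
  nlinarith [key, hprod]


/-- For the operational-statistics perceived distributions
(truncated exponentials with rate `lam t` given by
`1/lam t = f_t(w_t)·(Σ_{i<t} ξ_i)/(t-1)` where
`f_t(w) = (t-1)·((s/w)^{1/t} - 1)/ln(s/w) ∈ [(t-1)/t, 1)`), we have for `t ≥ 2`:
`d_K(F̂ₜ, F̂ₜ₊₁) ≤ 2/(t-1) + ξ_t / Σ_{i=1}^{t-1} ξ_i`. -/
theorem stmt14 (s qbar : ℝ) (hs : 0 < s) (hqbar : 0 < qbar)
    (ξ : ℕ → ℝ) (hξ : ∀ i, 0 < ξ i)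
    (w : ℕ → ℝ) (hw : ∀ t, 0 < w t ∧ w t < s)
    (lam : ℕ → ℝ) (hlampos : ∀ t, 0 < lam t)
    (hlam : ∀ t : ℕ, 2 ≤ t →
      1 / lam t =
        (((t : ℝ) - 1) * ((s / w t) ^ (1 / (t : ℝ)) - 1) / Real.log (s / w t)) *
          ((∑ i ∈ Finset.Icc 1 (t - 1), ξ i) / ((t : ℝ) - 1)))
    (hf : ∀ t : ℕ, 2 ≤ t →
      ((t : ℝ) - 1) / (t : ℝ) ≤
          ((t : ℝ) - 1) * ((s / w t) ^ (1 / (t : ℝ)) - 1) / Real.log (s / w t) ∧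
        ((t : ℝ) - 1) * ((s / w t) ^ (1 / (t : ℝ)) - 1) / Real.log (s / w t) < 1)
    (t : ℕ) (ht : 2 ≤ t) :
    (⨆ x : ℝ, |truncExpCDF (lam t) qbar x - truncExpCDF (lam (t + 1)) qbar x|)
      ≤ 2 / ((t : ℝ) - 1) + ξ t / (∑ i ∈ Finset.Icc 1 (t - 1), ξ i) := by
  have hsum : ∑ i ∈ Finset.Icc 1 (t + 1 - 1), ξ i
      = (∑ i ∈ Finset.Icc 1 (t - 1), ξ i) + ξ t := by
    have h1 : t + 1 - 1 = (t - 1) + 1 := by omega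
    rw [h1, Finset.sum_Icc_succ_top (by omega : 1 ≤ t - 1 + 1)]
    congr 2
    omega
  have hA := hlam t ht
  have hB := hlam (t + 1) (by omega)
  obtain ⟨hfl, hfu⟩ := hf t ht
  obtain ⟨hgl, hgu⟩ := hf (t + 1) (by omega)
  rw [hsum] at hB
  push_cast at hB hgl hgu
  set T := (t:ℝ) with hTdef
  have hT : (2:ℝ) ≤ T := by rw [hTdef]; exact_mod_cast ht
  have hT1 : (0:ℝ) < T - 1 := by linarith
  have hT0 : (0:ℝ) < T := by linarith
  set S := ∑ i ∈ Finset.Icc 1 (t - 1), ξ i with hSdef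
  have hSpos : 0 < S := Finset.sum_pos (fun i _ => hξ i) (by
    rw [Finset.nonempty_Icc]; omega)
  set f := (T - 1) * ((s / w t) ^ (1 / T) - 1) / Real.log (s / w t) with hfdef
  set g := (T + 1 - 1) * ((s / w (t + 1)) ^ (1 / (T + 1)) - 1) / Real.log (s / w (t + 1))
    with hgdef
  -- clean bounds
  have hfl' : T - 1 ≤ f * T := by
    rw [div_le_iff₀ hT0] at hfl; linarith
  have hgl' : T ≤ g * (T + 1) := by
    have : (T + 1 - 1) / (T + 1) = T / (T + 1) := by ring
    rw [this, div_le_iff₀ (by linarith : (0:ℝ) < T + 1)] at hgl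
    linarith
  have hfp : 0 < f := by
    have : (0:ℝ) < (T - 1) / T := div_pos hT1 hT0
    linarith
  have hgp : 0 < g := by
    have h1 : (0:ℝ) < T / (T + 1) := div_pos hT0 (by linarith)
    have h2 : (T + 1 - 1) / (T + 1) = T / (T + 1) := by ring
    rw [h2] at hgl
    linarith
  have hB' : 1 / lam (t + 1) = g * ((S + ξ t) / T) := by
    rw [hB]; ring
  -- key inequality on reciprocals
  set R := 2 / (T - 1) + ξ t / S with hRdef
  have hRpos : 0 ≤ R := by
    have h1 : (0:ℝ) ≤ 2 / (T - 1) := div_nonneg (by norm_num) hT1.le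
    have h2 : (0:ℝ) ≤ ξ t / S := div_nonneg (hξ t).le hSpos.le
    rw [hRdef]; linarith
  have hApos : 0 < 1 / lam t := one_div_pos.mpr (hlampos t)
  have hBpos : 0 < 1 / lam (t + 1) := one_div_pos.mpr (hlampos (t + 1))
  have key1 : 1 / lam (t + 1) - 1 / lam t ≤ R * (1 / lam (t + 1)) := by
    rw [hA, hB']
    exact keycase1' T S (ξ t) f g hT hSpos (hξ t) hfl' hfu hgl' hgu hfp hgp
  have key2 : 1 / lam t - 1 / lam (t + 1) ≤ R * (1 / lam t) := by
    rw [hA, hB']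
    exact keycase2' T S (ξ t) f g hT hSpos (hξ t) hfl' hfu hgl' hgu hfp hgp
  -- convert to rate-form bounds
  have bound1 : 1 - lam t / lam (t + 1) ≤ R := by
    have e1 : 1 - lam t / lam (t + 1) = (1 / lam t - 1 / lam (t + 1)) * lam t := by
      field_simp [(hlampos t).ne', (hlampos (t + 1)).ne']
    have e2 : R * (1 / lam t) * lam t = R := by
      rw [mul_one_div, div_mul_cancel₀ _ (hlampos t).ne']
    rw [e1, ← e2]
    exact mul_le_mul_of_nonneg_right key2 (hlampos t).le
  have bound2 : 1 - lam (t + 1) / lam t ≤ R := by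
    have e1 : 1 - lam (t + 1) / lam t = (1 / lam (t + 1) - 1 / lam t) * lam (t + 1) := by
      field_simp [(hlampos t).ne', (hlampos (t + 1)).ne']
    have e2 : R * (1 / lam (t + 1)) * lam (t + 1) = R := by
      rw [mul_one_div, div_mul_cancel₀ _ (hlampos (t + 1)).ne']
    rw [e1, ← e2]
    exact mul_le_mul_of_nonneg_right key1 (hlampos (t + 1)).le
  -- pointwise bound and sup
  clear hlam hf hA hB hB' hsum hfl hfu hgl hgu hfl' hgl' hfp hgp key1 key2 hApos hBpos
    hfdef hgdef hw hSdef hSpos hTdef hs hqbar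
  clear f g
  refine ciSup_le fun x => ?_
  unfold truncExpCDF
  split_ifs with h1 h2
  · simpa using hRpos
  · have hx : 0 ≤ x := not_lt.1 h1
    have hexp : (1 - Real.exp (-lam t * x)) - (1 - Real.exp (-lam (t + 1) * x))
        = Real.exp (-lam (t + 1) * x) - Real.exp (-lam t * x) := by ring
    rw [hexp]
    rcases le_total (lam t) (lam (t + 1)) with hc | hc
    · have hmono : Real.exp (-lam (t + 1) * x) ≤ Real.exp (-lam t * x) := by
        apply Real.exp_le_exp.2
        nlinarith [mul_le_mul_of_nonneg_right hc hx]
      rw [abs_of_nonpos (by linarith), neg_sub]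
      calc Real.exp (-lam t * x) - Real.exp (-lam (t + 1) * x)
          ≤ 1 - lam t / lam (t + 1) := exp_sub_exp_le' (hlampos t) hc
        _ ≤ R := bound1
    · have hmono : Real.exp (-lam t * x) ≤ Real.exp (-lam (t + 1) * x) := by
        apply Real.exp_le_exp.2
        nlinarith [mul_le_mul_of_nonneg_right hc hx]
      rw [abs_of_nonneg (by linarith)]
      calc Real.exp (-lam (t + 1) * x) - Real.exp (-lam t * x)
          ≤ 1 - lam (t + 1) / lam t := exp_sub_exp_le' (hlampos (t + 1)) hc
        _ ≤ R := bound2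
  · simpa using hRpos
end

section
/- Suppose at each period t in the exploitation phase (with t ≥ τ₀ + max{M+2, K} + 1), an event 'epoch ends' occurs with probability at least √(1/(M·(t - τ₀))) whenever t ∉ E (an adversarially chosen subset), conditional on the epoch not having ended earlier. If the epoch runs through period τ₁ - 1 without ending, then with probability at least 1 - 1/T², the number of periods t ∈ [τ₀ + max{M+2,K}+1, τ₁ - 1] with t ∉ E is at most 2·log(T)·√(M·(τ₁ - 1 - τ₀)) + 1. -/
open MeasureTheory Finset

set_option maxHeartbeats 1000000 in
/-- Let `A t` be the event that the epoch has not ended by the end of period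
`t` (so `A` is decreasing). Suppose that for every period
`t ≥ τ₀ + max(M+2, K) + 1` with `t ∉ E`, the epoch ends at `t` with probability at least
`√(1/(M·(t - τ₀)))` conditional on not having ended earlier, i.e.
`ℙ(A t) ≤ (1 - √(1/(M(t-τ₀))))·ℙ(A (t-1))`. If the number of periods
`t ∈ [τ₀ + max(M+2,K)+1, τ₁-1]` with `t ∉ E` exceeds
`2·log T·√(M·(τ₁ - 1 - τ₀)) + 1`, then the probability that the epoch runs through period
`τ₁ - 1` without ending is at most `1/T²`. -/
theorem stmt19 {Ω : Type*} [MeasurableSpace Ω] (μ : Measure Ω) [IsProbabilityMeasure μ]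
    (T M K τ₀ τ₁ : ℕ) (hT : 2 ≤ T) (hM : 1 ≤ M) (hK : 1 ≤ K) (hτ : τ₀ < τ₁)
    (E : Set ℕ) [DecidablePred (· ∈ E)]
    (A : ℕ → Set Ω) (hAmeas : ∀ t, MeasurableSet (A t))
    (hAmono : ∀ t, A (t + 1) ⊆ A t)
    (hdetect : ∀ t : ℕ, τ₀ + max (M + 2) K + 1 ≤ t → t ∉ E →
      (μ (A t)).toReal
        ≤ (1 - Real.sqrt (1 / ((M : ℝ) * ((t : ℝ) - (τ₀ : ℝ))))) * (μ (A (t - 1))).toReal)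
    (hcount :
      2 * Real.log T * Real.sqrt ((M : ℝ) * ((τ₁ : ℝ) - 1 - (τ₀ : ℝ))) + 1 <
        (((Finset.Icc (τ₀ + max (M + 2) K + 1) (τ₁ - 1)).filter (fun t => t ∉ E)).card : ℝ)) :
    (μ (A (τ₁ - 1))).toReal ≤ 1 / (T : ℝ) ^ 2 := by
  set a := τ₀ + max (M + 2) K + 1 with ha
  set b := τ₁ - 1 with hb
  have hT1 : (1:ℝ) ≤ (T:ℝ) := by exact_mod_cast Nat.one_le_of_lt hT
  have hlogT : 0 ≤ Real.log T := Real.log_nonneg hT1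
  have hsq0 : 0 ≤ Real.sqrt ((M:ℝ) * ((τ₁:ℝ) - 1 - τ₀)) := Real.sqrt_nonneg _
  have hcard1 : (1:ℝ) < (((Icc a b).filter (fun t => t ∉ E)).card : ℝ) := by
    refine lt_of_le_of_lt ?_ hcount
    nlinarith
  have hcard1' : 1 ≤ ((Icc a b).filter (fun t => t ∉ E)).card := by exact_mod_cast hcard1.le
  have hab : a ≤ b := by
    by_contra h
    rw [Icc_eq_empty (by omega : ¬ a ≤ b)] at hcard1'
    simp at hcard1'
  have hbcast : ((b:ℕ):ℝ) = (τ₁:ℝ) - 1 := by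
    rw [hb]; push_cast [Nat.cast_sub (by omega : 1 ≤ τ₁)]; ring
  have hbτ : τ₀ + 4 ≤ b := by omega
  have hbR : ((τ₀:ℝ)) + 4 ≤ (b:ℝ) := by exact_mod_cast hbτ
  obtain ⟨X, hX⟩ : ∃ x : ℝ, x = (M:ℝ) * ((b:ℝ) - τ₀) := ⟨_, rfl⟩
  have hX1 : (1:ℝ) ≤ X := by
    have hM1 : (1:ℝ) ≤ (M:ℝ) := by exact_mod_cast hM
    nlinarith
  have hXpos : (0:ℝ) < X := lt_of_lt_of_le one_pos hX1
  obtain ⟨p, hp⟩ : ∃ x : ℝ, x = Real.sqrt (1 / X) := ⟨_, rfl⟩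
  have hp0 : 0 < p := by rw [hp]; exact Real.sqrt_pos.mpr (by positivity)
  have hp1 : p ≤ 1 := by
    rw [hp]
    exact Real.sqrt_le_one.mpr (by rw [div_le_one hXpos]; exact hX1)
  have key : ∀ m, m ≤ b →
      (μ (A m)).toReal ≤ (1 - p) ^ (((Icc a m).filter (fun t => t ∉ E)).card) := by
    intro m
    induction m with
    | zero =>
      intro _
      rw [Icc_eq_empty (by omega : ¬ a ≤ 0)]
      simpa using ENNReal.toReal_le_of_le_ofReal one_pos.le (by simp [prob_le_one])
    | succ m ih =>
      intro hm
      have hmb : m ≤ b := by omega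
      by_cases hma : m + 1 < a
      · rw [Icc_eq_empty (by omega : ¬ a ≤ m + 1)]
        simpa using ENNReal.toReal_le_of_le_ofReal one_pos.le (by simp [prob_le_one])
      · have ham : a ≤ m + 1 := le_of_not_gt hma
        have hIcc : Icc a (m+1) = insert (m+1) (Icc a m) := by
          ext x
          simp only [Finset.mem_Icc, Finset.mem_insert]
          omega
        by_cases hE : (m+1) ∈ E
        · have hcards : ((Icc a (m+1)).filter (fun t => t ∉ E)).card
              = ((Icc a m).filter (fun t => t ∉ E)).card := by
            rw [hIcc, filter_insert, if_neg (not_not_intro hE)]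
          rw [hcards]
          refine le_trans ?_ (ih hmb)
          exact ENNReal.toReal_mono (measure_ne_top μ _) (measure_mono (hAmono m))
        · have hdet := hdetect (m+1) ham hE
          simp only [Nat.add_sub_cancel] at hdet
          obtain ⟨q, hq⟩ : ∃ x : ℝ, x = Real.sqrt (1 / ((M:ℝ) * (((m:ℝ)+1) - τ₀))) := ⟨_, rfl⟩
          have hcast : ((m+1 : ℕ) : ℝ) = (m:ℝ)+1 := by push_cast; ring
          rw [hcast] at hdet
          have hqdet : (μ (A (m+1))).toReal ≤ (1 - q) * (μ (A m)).toReal := by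
            rw [hq]; exact hdet
          have hm1τ : (1:ℝ) ≤ ((m:ℝ)+1) - τ₀ := by
            have : τ₀ + 1 ≤ m + 1 := by omega
            have := (Nat.cast_le (α := ℝ)).mpr this
            push_cast at this ⊢
            linarith
          have hden : (0:ℝ) < (M:ℝ) * (((m:ℝ)+1) - τ₀) := by
            have hM1 : (1:ℝ) ≤ (M:ℝ) := by exact_mod_cast hM
            nlinarith
          have hpq : p ≤ q := by
            rw [hp, hq]
            apply Real.sqrt_le_sqrt
            apply div_le_div_of_nonneg_left one_pos.le hden
            rw [hX]
            have : ((m:ℝ)+1) ≤ (b:ℝ) := by exact_mod_cast (by omega : m + 1 ≤ b)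
            have hM0 : (0:ℝ) ≤ (M:ℝ) := by positivity
            nlinarith
          have hq1 : q ≤ 1 := by
            rw [hq]
            refine Real.sqrt_le_one.mpr (by rw [div_le_one hden]; nlinarith [(Nat.one_le_cast (α := ℝ)).mpr hM])
          have hcards : ((Icc a (m+1)).filter (fun t => t ∉ E)).card
              = ((Icc a m).filter (fun t => t ∉ E)).card + 1 := by
            rw [hIcc, filter_insert, if_pos hE,
              card_insert_of_notMem (fun hmem => by simp only [mem_filter, mem_Icc] at hmem; omega)]
          rw [hcards, pow_succ]
          calc (μ (A (m+1))).toReal ≤ (1 - q) * (μ (A m)).toReal := hqdet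
            _ ≤ (1 - p) * (μ (A m)).toReal := by
                apply mul_le_mul_of_nonneg_right (by linarith) ENNReal.toReal_nonneg
            _ ≤ (1 - p) * (1 - p) ^ (((Icc a m).filter (fun t => t ∉ E)).card) := by
                apply mul_le_mul_of_nonneg_left (ih hmb) (by linarith)
            _ = _ := by ring
  have hn := key b le_rfl
  obtain ⟨n, hncard⟩ : ∃ n, n = ((Icc a b).filter (fun t => t ∉ E)).card := ⟨_, rfl⟩
  rw [← hncard] at hn hcount
  have hcount' : 2 * Real.log T * Real.sqrt X + 1 < (n:ℝ) := by
    rw [hX, hbcast]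
    exact hcount
  have hpsX : p * Real.sqrt X = 1 := by
    rw [hp, ← Real.sqrt_mul (by positivity) X, one_div_mul_cancel hXpos.ne', Real.sqrt_one]
  have hpn : 2 * Real.log T < p * n := by
    have := mul_lt_mul_of_pos_left hcount' hp0
    calc 2 * Real.log T = 2 * Real.log T * (p * Real.sqrt X) := by rw [hpsX]; ring
      _ < p * n := by nlinarith
  have hexp : (1 - p) ^ n ≤ Real.exp (-(p * n)) := by
    have h1 : (1 - p) ≤ Real.exp (-p) := by
      have := Real.add_one_le_exp (-p)
      linarith
    calc (1 - p) ^ n ≤ Real.exp (-p) ^ n :=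
          pow_le_pow_left₀ (by linarith) h1 n
      _ = Real.exp (-(p * n)) := by
          rw [← Real.exp_nat_mul]; ring_nf
  have hfin : Real.exp (-(p * n)) ≤ 1 / (T:ℝ)^2 := by
    have h1 : Real.exp (-(p * n)) ≤ Real.exp (-(2 * Real.log T)) :=
      Real.exp_le_exp.mpr (by linarith)
    have h2 : Real.exp (-(2 * Real.log T)) = 1 / (T:ℝ)^2 := by
      rw [Real.exp_neg, two_mul, Real.exp_add, Real.exp_log (by linarith), one_div]
      ring
    linarith
  calc (μ (A b)).toReal ≤ (1 - p) ^ n := hn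
    _ ≤ Real.exp (-(p * n)) := hexp
    _ ≤ 1 / (T:ℝ)^2 := hfin
end
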